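/- Let d ≥ 1 and λ, n be natural numbers, and suppose A is a view-distance-d verifier over the label type Fin λ satisfying both: (completeness) for every connected acyclic simple graph G on Fin n there exists a labeling L : Fin n → Fin λ with A(G, L, v) = true for every vertex v; and (soundness) for every n' ≥ 1 and every connected simple graph G' on Fin n' that contains a cycle, for every labeling L' : Fin n' → Fin λ there exists a vertex v with A(G', L', v) = false. Then n ≤ λ^(2d+1) + 2d. -/

import Mathlib

/-- `A` is a view-distance-`d` verifier over the label type `Λ`: its verdict at a
vertex is invariant under labeled pointed isomorphisms of radius-`d` balls. -/
def IsLocalVerifier (Λ : Type*) (d : ℕ)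
    (A : ∀ n : ℕ, SimpleGraph (Fin n) → (Fin n → Λ) → Fin n → Bool) : Prop :=
  ∀ (n n' : ℕ) (G : SimpleGraph (Fin n)) (G' : SimpleGraph (Fin n'))
    (L : Fin n → Λ) (L' : Fin n' → Λ) (v : Fin n) (v' : Fin n')
    (φ : G.induce {u | G.dist v u ≤ d} ≃g G'.induce {u | G'.dist v' u ≤ d})
    (hv : G.dist v v ≤ d),
    (↑(φ ⟨v, hv⟩) = v') →
    (∀ u : {u | G.dist v u ≤ d}, L' ↑(φ u) = L ↑u) →
    A n G L v = A n' G' L' v'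


open SimpleGraph

private lemma modHelper (x m : ℕ) (hm : 0 < m) (h : x < 2 * m) :
    x % m = if m ≤ x then x - m else x := by
  split
  · rw [Nat.mod_eq_sub_mod ‹m ≤ x›, Nat.mod_eq_of_lt (by omega)]
  · exact Nat.mod_eq_of_lt (by omega)

private lemma modHelper3 (x m : ℕ) (hm : 0 < m) (h : x < 3 * m) :
    x % m = if 2 * m ≤ x then x - 2 * m else if m ≤ x then x - m else x := by
  split
  · rw [Nat.mod_eq_sub_mod (by omega), Nat.mod_eq_sub_mod (by omega),
      Nat.mod_eq_of_lt (by omega)]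
    omega
  · split
    · rw [Nat.mod_eq_sub_mod ‹m ≤ x›, Nat.mod_eq_of_lt (by omega)]
    · exact Nat.mod_eq_of_lt (by omega)

private lemma potential_le_length {V : Type*} {G : SimpleGraph V} (f : V → ℕ)
    (hf : ∀ a b : V, G.Adj a b → f b ≤ f a + 1) {a b : V} (w : G.Walk a b) :
    f b ≤ f a + w.length := by
  induction w with
  | nil => simp
  | @cons u v _ h q ih =>
    have := hf u v h
    simp only [SimpleGraph.Walk.length_cons]
    omega

private lemma potential_le_dist {V : Type*} {G : SimpleGraph V} (f : V → ℕ)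
    (hf : ∀ a b : V, G.Adj a b → f b ≤ f a + 1) {a b : V} (h : G.Reachable a b)
    (ha : f a = 0) : f b ≤ G.dist a b := by
  obtain ⟨w, hw⟩ := h.exists_walk_length_eq_dist
  have := potential_le_length f hf w
  omega

private lemma reachable_invariant {V : Type*} {G : SimpleGraph V} (P : V → Prop)
    (hP : ∀ a b : V, G.Adj a b → (P a ↔ P b)) {a b : V} (h : G.Reachable a b) :
    P a ↔ P b := by
  obtain ⟨w⟩ := h
  induction w with
  | nil => rfl
  | @cons u v _ h q ih => exact (hP u v h).trans ih

private lemma pathGraph_connected' {n : ℕ} (hn : 0 < n) : (pathGraph n).Connected := by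
  obtain ⟨m, rfl⟩ := Nat.exists_eq_succ_of_ne_zero hn.ne'
  exact pathGraph_connected m

private lemma cycleGraph_connected' {n : ℕ} (hn : 0 < n) : (cycleGraph n).Connected := by
  obtain ⟨m, rfl⟩ := Nat.exists_eq_succ_of_ne_zero hn.ne'
  exact cycleGraph_connected

private lemma pathGraph_dist_le {n : ℕ} : ∀ (k : ℕ) (a b : Fin n), a.val + k = b.val →
    (pathGraph n).dist a b ≤ k := by
  intro k
  induction k with
  | zero =>
    intro a b h
    have : a = b := Fin.ext (by omega)
    subst this
    simp
  | succ k ih =>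
    intro a b h
    have hlt : a.val + k < n := by omega
    have h1 : (pathGraph n).Adj ⟨a.val + k, hlt⟩ b := by
      rw [pathGraph_adj]; left; simp; omega
    have h2 : (pathGraph n).dist ⟨a.val + k, hlt⟩ b ≤ 1 := by
      simpa using SimpleGraph.dist_le h1.toWalk
    have h3 := (pathGraph_connected' (by omega : 0 < n)).dist_triangle
      (u := a) (v := ⟨a.val + k, hlt⟩) (w := b)
    have h4 := ih a ⟨a.val + k, hlt⟩ rfl
    omega

private lemma pathGraph_dist {n : ℕ} (a b : Fin n) :
    (pathGraph n).dist a b = (max a.val b.val) - (min a.val b.val) := by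
  apply le_antisymm
  · rcases le_total a.val b.val with h | h
    · have := pathGraph_dist_le (b.val - a.val) a b (by omega)
      omega
    · have := pathGraph_dist_le (a.val - b.val) b a (by omega)
      rw [SimpleGraph.dist_comm] at this
      omega
  · have := potential_le_dist (G := pathGraph n)
      (fun u => (max a.val u.val) - (min a.val u.val)) ?_
      ((pathGraph_connected' (a.pos)).preconnected a b) (by simp)
    · simpa using this
    · intro x y hxy
      rw [pathGraph_adj] at hxy
      omega

private lemma pathGraph_isAcyclic {n : ℕ} : (pathGraph n).IsAcyclic := by
  rw [isAcyclic_iff_forall_adj_isBridge]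
  intro v w hvw
  rw [isBridge_iff]
  intro hr
  have hadj := pathGraph_adj.mp hvw
  have key := reachable_invariant (fun u : Fin n => u.val ≤ min v.val w.val) ?_ hr
  · omega
  · intro a b hab
    simp only [deleteEdges_adj, Set.mem_singleton_iff] at hab
    obtain ⟨hab1, hab2⟩ := hab
    rw [pathGraph_adj] at hab1
    have hne : a ≠ b := by
      intro hc; rw [hc] at hab1; omega
    have hSym : ¬(a = v ∧ b = w ∨ a = w ∧ b = v) := by
      intro hc
      exact hab2 (Sym2.eq_iff.mpr (by tauto))
    simp only [Fin.ext_iff] at hSym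
    push_neg at hSym
    omega

private lemma cycleGraph_adj_iff {m : ℕ} (hm : 2 ≤ m) (a b : Fin m) :
    (cycleGraph m).Adj a b ↔
      ((a.val = b.val + 1 ∨ (b.val = m - 1 ∧ a.val = 0)) ∨
       (b.val = a.val + 1 ∨ (a.val = m - 1 ∧ b.val = 0))) := by
  have ha := a.isLt
  have hb := b.isLt
  rw [cycleGraph_adj']
  have h1 : (a - b).val = (m - b.val + a.val) % m := by rw [Fin.sub_def]
  have h2 : (b - a).val = (m - a.val + b.val) % m := by rw [Fin.sub_def]
  rw [h1, h2, modHelper _ _ (by omega) (by omega), modHelper _ _ (by omega) (by omega)]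
  split_ifs <;> omega

private lemma cycleGraph_not_acyclic {m : ℕ} (hm : 3 ≤ m) : ¬(cycleGraph m).IsAcyclic := by
  intro h
  rw [isAcyclic_iff_forall_adj_isBridge] at h
  have h01 : (cycleGraph m).Adj ⟨0, by omega⟩ ⟨1, by omega⟩ := by
    rw [cycleGraph_adj_iff (by omega)]
    exact Or.inr (Or.inl (by simp))
  have hb := h h01
  apply hb
  set G' := (cycleGraph m).deleteEdges {s((⟨0, by omega⟩ : Fin m), (⟨1, by omega⟩ : Fin m))}
    with hG'
  have hadj : ∀ (x y : Fin m), (cycleGraph m).Adj x y →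
      ¬(x.val = 0 ∧ y.val = 1) → ¬(x.val = 1 ∧ y.val = 0) → G'.Adj x y := by
    intro x y hxy hx hy
    rw [hG', deleteEdges_adj]
    refine ⟨hxy, fun hc1 => ?_⟩
    rw [Set.mem_singleton_iff, Sym2.eq_iff] at hc1
    simp only [Fin.ext_iff, Fin.val_mk] at hc1
    tauto
  have step : ∀ k, 1 ≤ k → ∀ (hk2 : k < m), G'.Reachable ⟨1, by omega⟩ ⟨k, hk2⟩ := by
    intro k
    induction k with
    | zero => omega
    | succ k ih =>
      intro hk hk2
      rcases Nat.eq_or_lt_of_le hk with h1 | h1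
      · have : (⟨1, by omega⟩ : Fin m) = ⟨k + 1, hk2⟩ := Fin.ext (by simp only [Fin.val_mk]; omega)
        rw [← this]
      · have hkk : 1 ≤ k := by omega
        refine (ih hkk (by omega)).trans (Adj.reachable ?_)
        apply hadj
        · rw [cycleGraph_adj_iff (by omega)]
          exact Or.inr (Or.inl (by simp))
        · simp only [Fin.val_mk]; omega
        · simp only [Fin.val_mk]; omega
  have hlast : G'.Adj ⟨m - 1, by omega⟩ ⟨0, by omega⟩ := by
    apply hadj
    · rw [cycleGraph_adj_iff (by omega)]
      exact Or.inr (Or.inr (by simp))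
    · simp only [Fin.val_mk]; omega
    · simp only [Fin.val_mk]; omega
  exact ((step (m - 1) (by omega) (by omega)).trans hlast.reachable).symm

private lemma cycleGraph_dist_shift {m : ℕ} (hm : 2 ≤ m) (w : Fin m) :
    ∀ k : ℕ, (cycleGraph m).dist w ⟨(w.val + k) % m, Nat.mod_lt _ (by omega)⟩ ≤ k := by
  intro k
  induction k with
  | zero =>
    have : (⟨(w.val + 0) % m, Nat.mod_lt _ (by omega)⟩ : Fin m) = w :=
      Fin.ext (by simp [Nat.mod_eq_of_lt w.isLt])
    rw [this]
    simp
  | succ k ih =>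
    have e1 : (w.val + (k + 1)) % m = ((w.val + k) % m + 1) % m := by
      rw [← Nat.add_assoc, Nat.add_mod (w.val + k) 1 m,
        Nat.mod_eq_of_lt (show 1 < m by omega)]
    have hadj : (cycleGraph m).Adj ⟨(w.val + k) % m, Nat.mod_lt _ (by omega)⟩
        ⟨(w.val + (k + 1)) % m, Nat.mod_lt _ (by omega)⟩ := by
      rw [cycleGraph_adj_iff hm]
      have hx : (w.val + k) % m < m := Nat.mod_lt _ (by omega)
      simp only [e1]
      rw [modHelper ((w.val + k) % m + 1) m (by omega) (by omega)]
      split_ifs <;> omega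
    have h2 : (cycleGraph m).dist ⟨(w.val + k) % m, Nat.mod_lt _ (by omega)⟩
        ⟨(w.val + (k + 1)) % m, Nat.mod_lt _ (by omega)⟩ ≤ 1 := by
      simpa using SimpleGraph.dist_le hadj.toWalk
    have h3 := (cycleGraph_connected' (show 0 < m by omega)).dist_triangle
      (u := w) (v := ⟨(w.val + k) % m, Nat.mod_lt _ (by omega)⟩)
      (w := ⟨(w.val + (k + 1)) % m, Nat.mod_lt _ (by omega)⟩)
    omega

private lemma cycleGraph_ball {m d : ℕ} (hm : 2 * d + 2 ≤ m) (w u : Fin m) :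
    (cycleGraph m).dist w u ≤ d ↔
      ∃ s, s ≤ 2 * d ∧ u.val = (w.val + (m - d) + s) % m := by
  have hm0 : 0 < m := by omega
  have hw := w.isLt
  have hu := u.isLt
  constructor
  · intro hdist
    have hpot := potential_le_dist (G := cycleGraph m)
      (fun x => min ((x.val + m - w.val) % m) ((w.val + m - x.val) % m)) ?_
      ((cycleGraph_connected' hm0).preconnected w u) ?_
    · rw [modHelper (u.val + m - w.val) m hm0 (by omega),
        modHelper (w.val + m - u.val) m hm0 (by omega)] at hpot
      -- now pick s
      rcases le_or_gt w.val u.val with hcase | hcase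
      · -- u ≥ w : forward distance u - w, backward m - (u - w)
        rcases le_or_gt (u.val - w.val) d with hfwd | hfwd
        · exact ⟨d + (u.val - w.val), by omega, by
            rw [modHelper3 _ _ hm0 (by omega)]; split_ifs <;> omega⟩
        · -- must be backward: m - (u - w) ≤ d
          have hbwd : m - (u.val - w.val) ≤ d := by
            split_ifs at hpot <;> omega
          exact ⟨d - (m - (u.val - w.val)), by omega, by
            rw [modHelper3 _ _ hm0 (by omega)]; split_ifs <;> omega⟩
      · rcases le_or_gt (w.val - u.val) d with hbwd | hbwd
        · exact ⟨d - (w.val - u.val), by omega, by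
            rw [modHelper3 _ _ hm0 (by omega)]; split_ifs <;> omega⟩
        · have hfwd : m - (w.val - u.val) ≤ d := by
            split_ifs at hpot <;> omega
          exact ⟨d + (m - (w.val - u.val)), by omega, by
            rw [modHelper3 _ _ hm0 (by omega)]; split_ifs <;> omega⟩
    · intro a b hab
      have ha := a.isLt
      have hb := b.isLt
      rw [cycleGraph_adj_iff (by omega)] at hab
      rw [modHelper (a.val + m - w.val) m hm0 (by omega),
        modHelper (w.val + m - a.val) m hm0 (by omega),
        modHelper (b.val + m - w.val) m hm0 (by omega),
        modHelper (w.val + m - b.val) m hm0 (by omega)]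
      split_ifs <;> omega
    · have : w.val + m - w.val = m := by omega
      rw [this, Nat.mod_self]
      omega
  · rintro ⟨s, hs, hval⟩
    rcases le_or_gt d s with hsd | hsd
    · -- u = (w + (s - d)) % m, distance ≤ s - d ≤ d
      have heq : (w.val + (m - d) + s) % m = (w.val + (s - d)) % m := by
        have h1 : w.val + (m - d) + s = w.val + (s - d) + m := by omega
        rw [h1, Nat.add_mod_right]
      have := cycleGraph_dist_shift (by omega) w (s - d)
      have hufin : u = ⟨(w.val + (s - d)) % m, Nat.mod_lt _ (by omega)⟩ :=
        Fin.ext (by rw [hval, heq])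
      rw [hufin]
      omega
    · -- w = (u + (d - s)) % m, distance ≤ d - s ≤ d
      have := cycleGraph_dist_shift (by omega) u (d - s)
      have hwfin : w = ⟨(u.val + (d - s)) % m, Nat.mod_lt _ (by omega)⟩ := by
        apply Fin.ext
        simp only []
        rw [hval, Nat.mod_add_mod]
        have h1 : w.val + (m - d) + s + (d - s) = w.val + m := by omega
        rw [h1, Nat.add_mod_right, Nat.mod_eq_of_lt hw]
      rw [SimpleGraph.dist_comm, hwfin]
      omega

private lemma ball_iso {n m d : ℕ} (hm2 : 2 * d + 2 ≤ m) (w : Fin m) (c : Fin n)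
    (hcd : d ≤ c.val) (hcn : c.val + d < n) :
    ∃ φ : ((cycleGraph m).induce {u | (cycleGraph m).dist w u ≤ d}) ≃g
        ((pathGraph n).induce {u | (pathGraph n).dist c u ≤ d}),
      (∀ hvv : (cycleGraph m).dist w w ≤ d,
        ((φ ⟨w, hvv⟩ : {u : Fin n | (pathGraph n).dist c u ≤ d}) : Fin n) = c) ∧
      ∀ u : {u : Fin m | (cycleGraph m).dist w u ≤ d},
        ∃ s, s ≤ 2 * d ∧
          ((u : Fin m)).val = ((w.val + (m - d)) % m + s) % m ∧
          ((φ u : {u : Fin n | (pathGraph n).dist c u ≤ d}) : Fin n).val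
            = c.val - d + s := by
  have hm0 : 0 < m := by omega
  have hwlt := w.isLt
  set b0 := (w.val + (m - d)) % m with hb0
  have hb0m : b0 < m := Nat.mod_lt _ hm0
  have hmem : ∀ u : Fin m, ((cycleGraph m).dist w u ≤ d) ↔
      ∃ s, s ≤ 2 * d ∧ u.val = (b0 + s) % m := by
    intro u
    rw [cycleGraph_ball hm2]
    apply exists_congr
    intro s
    rw [hb0, Nat.mod_add_mod]
  set fC : Fin (2 * d + 1) → {u : Fin m | (cycleGraph m).dist w u ≤ d} :=
    fun s => ⟨⟨(b0 + s.val) % m, Nat.mod_lt _ hm0⟩, by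
      rw [Set.mem_setOf_eq, hmem]; exact ⟨s.val, by omega, rfl⟩⟩ with hfC
  have bijC : Function.Bijective fC := by
    constructor
    · intro s t hst
      have hval : (b0 + s.val) % m = (b0 + t.val) % m :=
        congrArg (fun z : {u : Fin m | (cycleGraph m).dist w u ≤ d} => z.val.val) hst
      rw [modHelper (b0 + s.val) m hm0 (by omega),
        modHelper (b0 + t.val) m hm0 (by omega)] at hval
      apply Fin.ext
      split_ifs at hval <;> omega
    · rintro ⟨u, hu⟩
      obtain ⟨s, hs, hval⟩ := (hmem u).mp hu
      exact ⟨⟨s, by omega⟩,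
        Subtype.ext (Fin.ext (by simp only [Fin.val_mk]; exact hval.symm))⟩
  have hmemP : ∀ u : Fin n, ((pathGraph n).dist c u ≤ d) ↔
      (c.val - d ≤ u.val ∧ u.val ≤ c.val + d) := by
    intro u
    rw [pathGraph_dist]
    omega
  set fP : Fin (2 * d + 1) → {u : Fin n | (pathGraph n).dist c u ≤ d} :=
    fun s => ⟨⟨c.val - d + s.val, by omega⟩, by
      rw [Set.mem_setOf_eq, hmemP]; simp only [Fin.val_mk]; omega⟩ with hfP
  have bijP : Function.Bijective fP := by
    constructor
    · intro s t hst
      have hval : c.val - d + s.val = c.val - d + t.val :=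
        congrArg (fun z : {u : Fin n | (pathGraph n).dist c u ≤ d} => z.val.val) hst
      apply Fin.ext
      omega
    · rintro ⟨u, hu⟩
      have hu' := (hmemP u).mp hu
      exact ⟨⟨u.val - (c.val - d), by omega⟩,
        Subtype.ext (Fin.ext (by simp only [hfP, Fin.val_mk]; omega))⟩
  set eqC := Equiv.ofBijective fC bijC with heqC
  set eqP := Equiv.ofBijective fP bijP with heqP
  set equiv := eqC.symm.trans eqP with hequiv
  have hkey : ∀ s : Fin (2 * d + 1), equiv (fC s) = fP s := by
    intro s
    show eqP (eqC.symm (fC s)) = fP s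
    rw [show fC s = eqC s from rfl, Equiv.symm_apply_apply]
    rfl
  refine ⟨⟨equiv, ?_⟩, ?_, ?_⟩
  · intro a b
    obtain ⟨s, rfl⟩ := bijC.2 a
    obtain ⟨t, rfl⟩ := bijC.2 b
    rw [hkey s, hkey t]
    simp only [comap_adj, Function.Embedding.coe_subtype]
    show (pathGraph n).Adj ⟨c.val - d + s.val, _⟩ ⟨c.val - d + t.val, _⟩ ↔
      (cycleGraph m).Adj ⟨(b0 + s.val) % m, _⟩ ⟨(b0 + t.val) % m, _⟩
    rw [pathGraph_adj, cycleGraph_adj_iff (by omega)]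
    simp only [Fin.val_mk]
    rw [modHelper (b0 + s.val) m hm0 (by omega),
      modHelper (b0 + t.val) m hm0 (by omega)]
    have hs := s.isLt
    have ht := t.isLt
    split_ifs <;> omega
  · intro hvv
    have hwd : fC ⟨d, by omega⟩ = ⟨w, hvv⟩ := by
      apply Subtype.ext
      apply Fin.ext
      simp only [hfC, Fin.val_mk]
      rw [hb0, Nat.mod_add_mod]
      have he : w.val + (m - d) + d = w.val + m := by omega
      rw [he, Nat.add_mod_right, Nat.mod_eq_of_lt hwlt]
    show ((equiv ⟨w, hvv⟩ : {u : Fin n | (pathGraph n).dist c u ≤ d}) : Fin n) = c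
    rw [← hwd, hkey]
    apply Fin.ext
    simp only [hfP, Fin.val_mk]
    omega
  · intro u
    obtain ⟨s, rfl⟩ := bijC.2 u
    refine ⟨s.val, by omega, rfl, ?_⟩
    show ((equiv (fC s) : {u : Fin n | (pathGraph n).dist c u ≤ d}) : Fin n).val = _
    rw [hkey]

set_option maxHeartbeats 1000000

/-- Lower bound for cycle absence: a view-distance-`d` verifier for acyclicity
using `lam` labels can only handle graphs with at most `lam^(2d+1) + 2d` vertices. -/
theorem cycle_absence_label_lower_bound (d : ℕ) (hd : 1 ≤ d) (lam n : ℕ)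
    (A : ∀ n : ℕ, SimpleGraph (Fin n) → (Fin n → Fin lam) → Fin n → Bool)
    (hA : IsLocalVerifier (Fin lam) d A)
    (hcomplete : ∀ G : SimpleGraph (Fin n), G.Connected → G.IsAcyclic →
      ∃ L : Fin n → Fin lam, ∀ v : Fin n, A n G L v = true)
    (hsound : ∀ (n' : ℕ), 1 ≤ n' → ∀ G' : SimpleGraph (Fin n'), G'.Connected →
      ¬ G'.IsAcyclic → ∀ L' : Fin n' → Fin lam, ∃ v : Fin n', A n' G' L' v = false) :
    n ≤ lam ^ (2 * d + 1) + 2 * d := by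
  by_contra hcon
  push_neg at hcon
  -- a labeling of the path graph accepted everywhere
  obtain ⟨L, hL⟩ := hcomplete (pathGraph n)
    (pathGraph_connected' (by omega)) pathGraph_isAcyclic
  -- pigeonhole on windows of length 2d+1
  have hcard : Fintype.card (Fin (2 * d + 1) → Fin lam) <
      Fintype.card (Fin (n - 2 * d)) := by
    rw [Fintype.card_fun, Fintype.card_fin, Fintype.card_fin, Fintype.card_fin]
    omega
  obtain ⟨x, y, hxy, hfeq⟩ := Fintype.exists_ne_map_eq_of_card_lt
    (fun (i : Fin (n - 2 * d)) (s : Fin (2 * d + 1)) =>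
      L ⟨i.val + s.val, by omega⟩) hcard
  obtain ⟨i0, j0, hij, hjn, hwin⟩ : ∃ i0 j0 : ℕ, i0 < j0 ∧ j0 < n - 2 * d ∧
      ∀ s : ℕ, s ≤ 2 * d → ∀ (h1 : i0 + s < n) (h2 : j0 + s < n),
        L ⟨i0 + s, h1⟩ = L ⟨j0 + s, h2⟩ := by
    rcases lt_or_gt_of_ne hxy with hlt | hlt
    · refine ⟨x.val, y.val, hlt, y.isLt, fun s hs h1 h2 => ?_⟩
      exact congrFun hfeq ⟨s, by omega⟩
    · refine ⟨y.val, x.val, hlt, x.isLt, fun s hs h1 h2 => ?_⟩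
      exact (congrFun hfeq ⟨s, by omega⟩).symm
  set p := j0 - i0 with hp
  have hp0 : 0 < p := by omega
  have hpj : i0 + p = j0 := by omega
  set m := (2 * d + 2) * p with hmdef
  have hm2 : 2 * d + 2 ≤ m := Nat.le_mul_of_pos_right _ hp0
  have hm0 : 0 < m := by omega
  have hpm : p ∣ m := dvd_mul_left p (2 * d + 2)
  -- the periodic labeling of the cycle
  set L' : Fin m → Fin lam :=
    fun t => L ⟨i0 + t.val % p, by have := Nat.mod_lt t.val hp0; omega⟩ with hL'
  obtain ⟨w, hw⟩ := hsound m (by omega) (cycleGraph m) (cycleGraph_connected' hm0)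
    (cycleGraph_not_acyclic (by omega)) L'
  have hwlt := w.isLt
  -- the corresponding center on the path
  set t' := (w.val + (m - d)) % p with ht'
  have ht'p : t' < p := Nat.mod_lt _ hp0
  obtain ⟨c, hcval⟩ : ∃ c : Fin n, c.val = i0 + d + t' := ⟨⟨i0 + d + t', by omega⟩, rfl⟩
  have hcd : d ≤ c.val := by omega
  have hcn : c.val + d < n := by omega
  -- periodicity of L on the relevant range
  have periodic : ∀ u : ℕ, u ≤ 2 * d + p → ∀ (h1 : i0 + u < n) (h2 : i0 + u % p < n),
      L ⟨i0 + u, h1⟩ = L ⟨i0 + u % p, h2⟩ := by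
    intro u
    induction u using Nat.strong_induction_on with
    | _ u ih =>
      intro hu h1 h2
      by_cases hup : u < p
      · have hmod : u % p = u := Nat.mod_eq_of_lt hup
        congr 1
        exact Fin.ext (by simp only [Fin.val_mk, hmod])
      · have hpu : p ≤ u := by omega
        have hmod : u % p = (u - p) % p := Nat.mod_eq_sub_mod hpu
        have hmplt := Nat.mod_lt (u - p) hp0
        calc L ⟨i0 + u, h1⟩ = L ⟨i0 + (u - p), by omega⟩ := by
              have h3 := hwin (u - p) (by omega) (by omega) (by omega)
              rw [h3]
              congr 1
              exact Fin.ext (by simp only [Fin.val_mk]; omega)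
          _ = L ⟨i0 + (u - p) % p, by omega⟩ := ih (u - p) (by omega) (by omega) _ _
          _ = L ⟨i0 + u % p, h2⟩ := by
              congr 1
              exact Fin.ext (by simp only [Fin.val_mk, hmod])
  -- the ball isomorphism
  obtain ⟨φ, hcent, hparam⟩ := ball_iso hm2 w c hcd hcn
  have hvv : (cycleGraph m).dist w w ≤ d := by rw [SimpleGraph.dist_self]; omega
  have hlab : ∀ u : {u : Fin m | (cycleGraph m).dist w u ≤ d},
      L ((φ u : {u : Fin n | (pathGraph n).dist c u ≤ d}) : Fin n) = L' (u : Fin m) := by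
    intro u
    obtain ⟨s, hs, hus, hφs⟩ := hparam u
    have e1 : (((w.val + (m - d)) % m + s) % m) % p = (t' + s) % p := by
      calc (((w.val + (m - d)) % m + s) % m) % p
          = ((w.val + (m - d)) % m + s) % p := Nat.mod_mod_of_dvd _ hpm
        _ = ((w.val + (m - d)) % m % p + s % p) % p := Nat.add_mod _ _ _
        _ = ((w.val + (m - d)) % p + s % p) % p := by rw [Nat.mod_mod_of_dvd _ hpm]
        _ = (t' + s) % p := by rw [← ht', Nat.add_mod t' s p, Nat.mod_eq_of_lt ht'p]
    have hmplt := Nat.mod_lt (t' + s) hp0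
    calc L ((φ u : {u : Fin n | (pathGraph n).dist c u ≤ d}) : Fin n)
        = L ⟨i0 + (t' + s), by omega⟩ := by
          congr 1
          exact Fin.ext (by simp only [Fin.val_mk]; omega)
      _ = L ⟨i0 + (t' + s) % p, by omega⟩ := periodic (t' + s) (by omega) _ _
      _ = L' (u : Fin m) := by
          simp only [hL']
          congr 1
          exact Fin.ext (by simp only [Fin.val_mk]; rw [hus, e1])
  have hAeq := hA m n (cycleGraph m) (pathGraph n) L' L w c φ hvv (hcent hvv) hlab
  rw [hw, hL c] at hAeq
  exact Bool.false_ne_true hAeq
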